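/- The 2-form ω̂_c = i·Σ_{j=1}^{n-1} dz_j ∧ dz̄_j + (i/(2 z_n z̄_n))·dz_n ∧ dz̄_n on ℂ^{n-1} × ℂ^× pulls back under the map Z_x : C_x × 𝕋ⁿ → M̂_c^o (given by z_j = (p̂_j - p̂_{j+1} - x/2)^{1/2}·Π_{k>j} e^{iq̂_k}, z_n = e^{-p̂_1}·Π_k e^{iq̂_k}) to the Darboux form Σ_{k=1}^{n} dq̂_k ∧ dp̂_k on C_x × 𝕋ⁿ. -/

import Mathlib

open Finset Complex

lemma aux1 {E : Type*} [NormedAddCommGroup E] [NormedSpace ℝ E]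
    (g : ℝ → ℝ) (g' : ℝ) (r s : E →L[ℝ] ℝ) (w : E)
    (hg : HasDerivAt g g' (r w)) :
    HasFDerivAt (fun w => (g (r w) : ℂ) * Complex.exp (Complex.I * (s w : ℂ)))
      ((g (r w) : ℂ) • (Complex.exp (Complex.I * (s w : ℂ)) • (Complex.I • Complex.ofRealCLM.comp s))
        + Complex.exp (Complex.I * (s w : ℂ)) • Complex.ofRealCLM.comp (g' • r)) w := by
  have h1 : HasFDerivAt (fun w => ((g (r w) : ℝ) : ℂ)) (Complex.ofRealCLM.comp (g' • r)) w :=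
    Complex.ofRealCLM.hasFDerivAt.comp w (hg.comp_hasFDerivAt w r.hasFDerivAt)
  have h2 : HasFDerivAt (fun w => Complex.I * ((s w : ℝ) : ℂ)) (Complex.I • Complex.ofRealCLM.comp s) w :=
    (Complex.ofRealCLM.hasFDerivAt.comp w s.hasFDerivAt).const_mul Complex.I
  have h3 : HasFDerivAt (fun w => Complex.exp (Complex.I * ((s w : ℝ) : ℂ)))
      (Complex.exp (Complex.I * (s w : ℂ)) • (Complex.I • Complex.ofRealCLM.comp s)) w :=
    (Complex.hasDerivAt_exp _).comp_hasFDerivAt w h2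
  exact h1.mul h3

lemma termC (E C : ℂ) (hE : E * C = 1) (a b a' b' : ℝ) :
    Complex.I * ((E * ((a:ℂ) + Complex.I * (b:ℂ))) * (C * ((a':ℂ) - Complex.I * (b':ℂ)))
      - (E * ((a':ℂ) + Complex.I * (b':ℂ))) * (C * ((a:ℂ) - Complex.I * (b:ℂ))))
    = ((2 * (a * b' - a' * b) : ℝ) : ℂ) := by
  push_cast
  linear_combination (Complex.I * ((a:ℂ) + Complex.I*b) * ((a':ℂ) - Complex.I*b')
    - Complex.I * ((a':ℂ) + Complex.I*b') * ((a:ℂ) - Complex.I*b)) * hE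
    + (-2*((a:ℂ)*b' - (a':ℂ)*b)) * (Complex.I_sq)

lemma tele (n : ℕ) (f : Fin (n+1) → ℝ) (k : Fin (n+1)) :
    ∑ i ∈ Finset.univ.filter (fun i : Fin n => i.castSucc < k), (f i.castSucc - f i.succ)
      = f 0 - f k := by
  induction k using Fin.induction with
  | zero => simp
  | succ j ih =>
      have hset : Finset.univ.filter (fun i : Fin n => i.castSucc < j.succ)
          = insert j (Finset.univ.filter (fun i : Fin n => i.castSucc < j.castSucc)) := by
        ext i
        simp only [Finset.mem_filter, Finset.mem_univ, true_and, Finset.mem_insert,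
          Fin.lt_def, Fin.coe_castSucc, Fin.val_succ, Fin.ext_iff]
        omega
      rw [hset, Finset.sum_insert (by simp only [Finset.mem_filter, Finset.mem_univ,
        true_and, Fin.lt_def, Fin.coe_castSucc]; omega), ih]
      ring

lemma Lsum (n : ℕ) (a b : Fin (n+1) → ℝ) :
    ∑ i : Fin n, (a i.castSucc - a i.succ) * ∑ k ∈ Ioi i.castSucc, b k
      = ∑ k : Fin (n+1), b k * (a 0 - a k) := by
  simp_rw [Finset.mul_sum]
  rw [Finset.sum_comm' (t' := (Finset.univ : Finset (Fin (n+1))))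
    (s' := fun k => Finset.univ.filter (fun i : Fin n => i.castSucc < k))
    (by intro i k; simp [Finset.mem_Ioi])]
  refine Finset.sum_congr rfl fun k _ => ?_
  rw [← Finset.sum_mul, tele, mul_comm]

lemma realid (n : ℕ) (u v : (Fin (n+1) → ℝ) × (Fin (n+1) → ℝ)) :
    ∑ j : Fin (n+1), (if (j:ℕ) = n then (v.1 0 * ∑ k, u.2 k - u.1 0 * ∑ k, v.2 k)
      else ((u.1 j - u.1 (j+1)) * ∑ k ∈ Ioi j, v.2 k
        - (v.1 j - v.1 (j+1)) * ∑ k ∈ Ioi j, u.2 k))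
    = ∑ k : Fin (n+1), (u.2 k * v.1 k - v.2 k * u.1 k) := by
  have hadd : ∀ i : Fin n, i.castSucc + 1 = i.succ := by
    intro i
    ext
    rw [Fin.val_add_one, if_neg (Fin.castSucc_lt_last i).ne]
    simp
  rw [Fin.sum_univ_castSucc, if_pos (Fin.val_last n),
    Finset.sum_congr rfl (fun (i : Fin n) _ =>
      if_neg (by simpa using i.isLt.ne : ¬ ((i.castSucc : ℕ) = n)))]
  simp_rw [hadd]
  rw [Finset.sum_sub_distrib, Lsum, Lsum]
  simp_rw [Finset.mul_sum, ← Finset.sum_sub_distrib, ← Finset.sum_add_distrib]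
  exact Finset.sum_congr rfl fun k _ => by ring

noncomputable def rmap (n : ℕ) (j : Fin (n+1)) :
    ((Fin (n+1) → ℝ) × (Fin (n+1) → ℝ)) →L[ℝ] ℝ :=
  if (j:ℕ) = n then
    ((ContinuousLinearMap.proj 0 : (Fin (n+1) → ℝ) →L[ℝ] ℝ)).comp
      (ContinuousLinearMap.fst ℝ (Fin (n+1) → ℝ) (Fin (n+1) → ℝ))
  else
    ((ContinuousLinearMap.proj j : (Fin (n+1) → ℝ) →L[ℝ] ℝ)).comp
      (ContinuousLinearMap.fst ℝ (Fin (n+1) → ℝ) (Fin (n+1) → ℝ))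
      - ((ContinuousLinearMap.proj (j+1) : (Fin (n+1) → ℝ) →L[ℝ] ℝ)).comp
      (ContinuousLinearMap.fst ℝ (Fin (n+1) → ℝ) (Fin (n+1) → ℝ))

noncomputable def smap (n : ℕ) (j : Fin (n+1)) :
    ((Fin (n+1) → ℝ) × (Fin (n+1) → ℝ)) →L[ℝ] ℝ :=
  if (j:ℕ) = n then
    ∑ k, ((ContinuousLinearMap.proj k : (Fin (n+1) → ℝ) →L[ℝ] ℝ)).comp
      (ContinuousLinearMap.snd ℝ (Fin (n+1) → ℝ) (Fin (n+1) → ℝ))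
  else
    ∑ k ∈ Ioi j, ((ContinuousLinearMap.proj k : (Fin (n+1) → ℝ) →L[ℝ] ℝ)).comp
      (ContinuousLinearMap.snd ℝ (Fin (n+1) → ℝ) (Fin (n+1) → ℝ))

lemma rmap_apply (n : ℕ) (j : Fin (n+1)) (w : (Fin (n+1) → ℝ) × (Fin (n+1) → ℝ)) :
    rmap n j w = if (j:ℕ) = n then w.1 0 else w.1 j - w.1 (j+1) := by
  unfold rmap; split <;> simp

lemma smap_apply (n : ℕ) (j : Fin (n+1)) (w : (Fin (n+1) → ℝ) × (Fin (n+1) → ℝ)) :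
    smap n j w = if (j:ℕ) = n then ∑ k, w.2 k else ∑ k ∈ Ioi j, w.2 k := by
  unfold smap; split <;> simp [ContinuousLinearMap.sum_apply]

noncomputable def gfun (n : ℕ) (x : ℝ) (j : Fin (n+1)) : ℝ → ℝ :=
  if (j:ℕ) = n then fun t => Real.exp (-t) else fun t => Real.sqrt (t - x/2)

noncomputable def gdv (n : ℕ) (x : ℝ) (pq : (Fin (n+1) → ℝ) × (Fin (n+1) → ℝ))
    (j : Fin (n+1)) : ℝ :=
  if (j:ℕ) = n then -Real.exp (-(pq.1 0))
  else 1/(2*Real.sqrt (pq.1 j - pq.1 (j+1) - x/2))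

lemma hasderiv_g (n : ℕ) (x : ℝ) (pq : (Fin (n+1) → ℝ) × (Fin (n+1) → ℝ))
    (hpq : ∀ j : Fin (n + 1), (j : ℕ) < n → x / 2 < pq.1 j - pq.1 (j + 1))
    (j : Fin (n+1)) :
    HasDerivAt (gfun n x j) (gdv n x pq j) (rmap n j pq) := by
  by_cases hj : (j:ℕ) = n
  · simp only [gfun, gdv, rmap_apply, hj, if_pos rfl, if_true]
    simpa [Function.comp_def] using (Real.hasDerivAt_exp (-(pq.1 0))).comp (pq.1 0) (hasDerivAt_neg (pq.1 0))
  · have hlt : (j:ℕ) < n := lt_of_le_of_ne (Nat.lt_succ_iff.mp j.isLt) hj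
    have hpos : 0 < pq.1 j - pq.1 (j+1) - x/2 := by linarith [hpq j hlt]
    simp only [gfun, gdv, rmap_apply, hj, if_neg hj, if_false]
    have h1 : HasDerivAt (fun t : ℝ => t - x/2) 1 (pq.1 j - pq.1 (j+1)) :=
      (hasDerivAt_id _).sub_const _
    simpa [Function.comp_def] using (Real.hasDerivAt_sqrt hpos.ne').comp (pq.1 j - pq.1 (j+1)) h1

theorem stmt19 (n : ℕ) (x : ℝ) (hx : 0 < x)
    (F : (Fin (n + 1) → ℝ) × (Fin (n + 1) → ℝ) → (Fin (n + 1) → ℂ))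
    (hF : ∀ (pq : (Fin (n + 1) → ℝ) × (Fin (n + 1) → ℝ)) (j : Fin (n + 1)),
      F pq j =
        if (j : ℕ) = n then
          (Real.exp (-(pq.1 0)) : ℂ)
            * ∏ k : Fin (n + 1), Complex.exp (Complex.I * (pq.2 k : ℂ))
        else
          (Real.sqrt (pq.1 j - pq.1 (j + 1) - x / 2) : ℂ)
            * ∏ k ∈ Ioi j, Complex.exp (Complex.I * (pq.2 k : ℂ))) :
    ∀ pq : (Fin (n + 1) → ℝ) × (Fin (n + 1) → ℝ),
      (∀ j : Fin (n + 1), (j : ℕ) < n → x / 2 < pq.1 j - pq.1 (j + 1)) →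
      ∀ u v : (Fin (n + 1) → ℝ) × (Fin (n + 1) → ℝ),
        (∑ j : Fin (n + 1),
          (if (j : ℕ) = n then 1 / (2 * (Complex.normSq (F pq j) : ℂ)) else 1)
            * (Complex.I *
                (fderiv ℝ F pq u j * (starRingEnd ℂ) (fderiv ℝ F pq v j)
                  - fderiv ℝ F pq v j * (starRingEnd ℂ) (fderiv ℝ F pq u j))))
        = ((∑ k : Fin (n + 1), (u.2 k * v.1 k - v.2 k * u.1 k) : ℝ) : ℂ) := by
  intro pq hpq u v
  have hcomp : ∀ j : Fin (n+1), (fun w => F w j)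
      = fun w : (Fin (n+1) → ℝ) × (Fin (n+1) → ℝ) =>
        ((gfun n x j (rmap n j w) : ℝ) : ℂ)
          * Complex.exp (Complex.I * ((smap n j w : ℝ) : ℂ)) := by
    intro j
    funext w
    have hprod : ∀ t : Finset (Fin (n+1)),
        ∏ k ∈ t, Complex.exp (Complex.I * (w.2 k : ℂ))
          = Complex.exp (Complex.I * ((∑ k ∈ t, w.2 k : ℝ) : ℂ)) := by
      intro t
      rw [← Complex.exp_sum]
      congr 1
      rw [Complex.ofReal_sum, Finset.mul_sum]
    rw [hF]
    by_cases hj : (j:ℕ) = n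
    · rw [if_pos hj, hprod]
      simp [gfun, rmap_apply, smap_apply, hj]
    · rw [if_neg hj, hprod]
      simp [gfun, rmap_apply, smap_apply, hj]
  set D : Fin (n+1) → ((Fin (n+1) → ℝ) × (Fin (n+1) → ℝ)) →L[ℝ] ℂ := fun j =>
    ((gfun n x j (rmap n j pq) : ℝ) : ℂ) •
        (Complex.exp (Complex.I * ((smap n j pq : ℝ) : ℂ)) •
          (Complex.I • Complex.ofRealCLM.comp (smap n j)))
      + Complex.exp (Complex.I * ((smap n j pq : ℝ) : ℂ)) •
          Complex.ofRealCLM.comp (gdv n x pq j • rmap n j) with hD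
  have hFd : HasFDerivAt F (ContinuousLinearMap.pi D) pq := by
    apply hasFDerivAt_pi''
    intro j
    rw [ContinuousLinearMap.proj_pi, hcomp j, hD]
    exact aux1 _ _ _ _ _ (hasderiv_g n x pq hpq j)
  have hfde := hFd.fderiv
  have hDval : ∀ (w : (Fin (n+1) → ℝ) × (Fin (n+1) → ℝ)) (j : Fin (n+1)),
      fderiv ℝ F pq w j
      = Complex.exp (Complex.I * ((smap n j pq : ℝ) : ℂ))
        * (((gdv n x pq j * rmap n j w : ℝ) : ℂ)
          + Complex.I * ((gfun n x j (rmap n j pq) * smap n j w : ℝ) : ℂ)) := by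
    intro w j
    rw [hfde]
    simp only [ContinuousLinearMap.pi_apply, hD, ContinuousLinearMap.add_apply,
      ContinuousLinearMap.smul_apply, ContinuousLinearMap.comp_apply,
      Complex.ofRealCLM_apply, ContinuousLinearMap.coe_smul', Pi.smul_apply,
      smul_eq_mul]
    push_cast
    ring
  have hEC : ∀ j : Fin (n+1), Complex.exp (Complex.I * ((smap n j pq : ℝ):ℂ))
      * Complex.exp (-(Complex.I * ((smap n j pq : ℝ):ℂ))) = 1 := by
    intro j; rw [← Complex.exp_add, add_neg_cancel, Complex.exp_zero]
  have hconj : ∀ (w : (Fin (n+1) → ℝ) × (Fin (n+1) → ℝ)) (j : Fin (n+1)),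
      (starRingEnd ℂ) (fderiv ℝ F pq w j)
      = Complex.exp (-(Complex.I * ((smap n j pq : ℝ):ℂ)))
        * (((gdv n x pq j * rmap n j w : ℝ):ℂ)
          - Complex.I * ((gfun n x j (rmap n j pq) * smap n j w : ℝ):ℂ)) := by
    intro w j
    rw [hDval, map_mul, map_add, map_mul, ← Complex.exp_conj]
    simp only [map_mul, Complex.conj_I, Complex.conj_ofReal]
    ring_nf
  have hterm : ∀ j : Fin (n+1),
      Complex.I * (fderiv ℝ F pq u j * (starRingEnd ℂ) (fderiv ℝ F pq v j)
        - fderiv ℝ F pq v j * (starRingEnd ℂ) (fderiv ℝ F pq u j))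
      = ((2 * ((gdv n x pq j * rmap n j u) * (gfun n x j (rmap n j pq) * smap n j v)
          - (gdv n x pq j * rmap n j v) * (gfun n x j (rmap n j pq) * smap n j u)) : ℝ) : ℂ) := by
    intro j
    rw [hconj u j, hconj v j, hDval u j, hDval v j]
    exact termC _ _ (hEC j) _ _ _ _
  have hsum : ∀ j : Fin (n+1),
      (if (j : ℕ) = n then 1 / (2 * (Complex.normSq (F pq j) : ℂ)) else 1)
        * (Complex.I *
            (fderiv ℝ F pq u j * (starRingEnd ℂ) (fderiv ℝ F pq v j)
              - fderiv ℝ F pq v j * (starRingEnd ℂ) (fderiv ℝ F pq u j)))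
      = (((if (j:ℕ) = n then (v.1 0 * ∑ k, u.2 k - u.1 0 * ∑ k, v.2 k)
          else ((u.1 j - u.1 (j+1)) * ∑ k ∈ Ioi j, v.2 k
            - (v.1 j - v.1 (j+1)) * ∑ k ∈ Ioi j, u.2 k)) : ℝ) : ℂ) := by
    intro j
    rw [hterm j]
    by_cases hj : (j:ℕ) = n
    · rw [if_pos hj, if_pos hj]
      have hFval : F pq j = ((Real.exp (-(pq.1 0)) : ℝ) : ℂ)
          * Complex.exp (Complex.I * ((smap n j pq : ℝ):ℂ)) := by
        rw [congrFun (hcomp j) pq]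
        simp [gfun, rmap_apply, hj]
      have hone : Complex.normSq (Complex.exp (Complex.I * ((smap n j pq : ℝ):ℂ))) = 1 := by
        rw [Complex.normSq_eq_norm_sq, mul_comm, Complex.norm_exp_ofReal_mul_I]; norm_num
      have hns : Complex.normSq (F pq j) = Real.exp (-(pq.1 0))^2 := by
        rw [hFval, Complex.normSq_mul, Complex.normSq_ofReal, hone]; ring
      rw [hns]
      simp only [gdv, gfun, rmap_apply, smap_apply, hj, if_pos rfl, if_true]
      have hne : ((Real.exp (-(pq.1 0)) : ℝ) : ℂ) ≠ 0 := by
        exact_mod_cast (Real.exp_pos _).ne'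
      push_cast
      field_simp
      ring
    · rw [if_neg hj, if_neg hj, one_mul]
      have hlt : (j:ℕ) < n := lt_of_le_of_ne (Nat.lt_succ_iff.mp j.isLt) hj
      have hpos : 0 < pq.1 j - pq.1 (j+1) - x/2 := by linarith [hpq j hlt]
      have hsq : Real.sqrt (pq.1 j - pq.1 (j+1) - x/2) ≠ 0 :=
        (Real.sqrt_pos.mpr hpos).ne'
      have hsq' : ((Real.sqrt (pq.1 j - pq.1 (j+1) - x/2) : ℝ) : ℂ) ≠ 0 := by
        exact_mod_cast hsq
      simp only [gdv, gfun, rmap_apply, smap_apply, hj, if_neg hj, if_false]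
      apply congrArg Complex.ofReal
      have h2s : 2 * (1/(2*Real.sqrt (pq.1 j - pq.1 (j+1) - x/2)))
          * Real.sqrt (pq.1 j - pq.1 (j+1) - x/2) = 1 := by
        have : ∀ s : ℝ, s ≠ 0 → 2 * (1/(2*s)) * s = 1 := by
          intro s hs; field_simp
        exact this _ hsq
      linear_combination ((u.1 j - u.1 (j+1)) * (∑ k ∈ Ioi j, v.2 k)
        - (v.1 j - v.1 (j+1)) * (∑ k ∈ Ioi j, u.2 k)) * h2s
  rw [Finset.sum_congr rfl (fun j _ => hsum j), ← Complex.ofReal_sum]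
  exact_mod_cast congrArg (Complex.ofReal) (realid n u v)
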